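/- If in a binary phylogenetic network N both parents of every reticulation are tree-vertices, then N is tree-based. -/

import Mathlib

/-- Out-degree of `v` in the digraph with arc relation `arc`. -/
def outdeg {V : Type} [Fintype V] [DecidableEq V] (arc : V → V → Bool) (v : V) : ℕ :=
  (Finset.univ.filter fun w => arc v w = true).card

/-- In-degree of `v` in the digraph with arc relation `arc`. -/
def indeg {V : Type} [Fintype V] [DecidableEq V] (arc : V → V → Bool) (v : V) : ℕ :=
  (Finset.univ.filter fun u => arc u v = true).card

/-- A rooted binary phylogenetic network on the finite vertex type `V`:
a directed acyclic graph with a single root of indegree 0 and outdegree 1 or 2,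
all other vertices being leaves (indegree 1, outdegree 0),
reticulations (indegree 2, outdegree 1) or tree-vertices (indegree 1, outdegree 2). -/
structure BinNet (V : Type) [Fintype V] [DecidableEq V] where
  arc : V → V → Bool
  root : V
  acyclic : ∀ v, ¬ Relation.TransGen (fun a b => arc a b = true) v v
  root_indeg : indeg arc root = 0
  root_outdeg : outdeg arc root = 1 ∨ outdeg arc root = 2
  vertex_types : ∀ v, v ≠ root →
    (indeg arc v = 1 ∧ outdeg arc v = 0) ∨
    (indeg arc v = 2 ∧ outdeg arc v = 1) ∨
    (indeg arc v = 1 ∧ outdeg arc v = 2)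

variable {V : Type} [Fintype V] [DecidableEq V]

/-- A leaf of the network. -/
def BinNet.IsLeaf (N : BinNet V) (v : V) : Prop := outdeg N.arc v = 0

/-- A reticulation of the network. -/
def BinNet.IsRetic (N : BinNet V) (v : V) : Prop := indeg N.arc v = 2

/-- A tree-vertex of the network. -/
def BinNet.IsTreeVertex (N : BinNet V) (v : V) : Prop :=
  v ≠ N.root ∧ indeg N.arc v = 1 ∧ outdeg N.arc v = 2

/-- An omnian: a non-leaf vertex all of whose children are reticulations. -/
def BinNet.IsOmnian (N : BinNet V) (v : V) : Prop :=
  outdeg N.arc v ≠ 0 ∧ ∀ w, N.arc v w = true → N.IsRetic w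

/-- `T` is a rooted spanning tree of `N` (using a subset of the arcs of `N`,
every non-root vertex having exactly one incoming tree arc). -/
def BinNet.IsSpanningTree (N : BinNet V) (T : V → V → Bool) : Prop :=
  (∀ u v, T u v = true → N.arc u v = true) ∧
  (∀ u, T u N.root = false) ∧
  (∀ v, v ≠ N.root → indeg T v = 1)

/-- `N` is tree-based: it has a rooted spanning tree without dummy leaves,
i.e. every leaf of the spanning tree is a leaf of `N`. -/
def BinNet.TreeBased (N : BinNet V) : Prop :=
  ∃ T, N.IsSpanningTree T ∧ ∀ v, outdeg T v = 0 → outdeg N.arc v = 0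

/-- If in a binary phylogenetic network `N` both parents of every
reticulation are tree-vertices, then `N` is tree-based. -/
theorem stmt_7 {V : Type} [Fintype V] [DecidableEq V] (N : BinNet V)
    (h : ∀ r, N.IsRetic r → ∀ p, N.arc p r = true → N.IsTreeVertex p) :
    N.TreeBased := by
  classical
  -- children and parents
  set children : V → Finset V := fun v => Finset.univ.filter fun w => N.arc v w = true with hch
  set parents : V → Finset V := fun v => Finset.univ.filter fun u => N.arc u v = true with hpa
  have hchcard : ∀ v, (children v).card = outdeg N.arc v := fun v => rfl
  have hpacard : ∀ v, (parents v).card = indeg N.arc v := fun v => rfl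
  have hmemch : ∀ v w, w ∈ children v ↔ N.arc v w = true := by
    intro v w; simp [hch]
  have hmempa : ∀ v u, u ∈ parents v ↔ N.arc u v = true := by
    intro v u; simp [hpa]
  -- omnians have outdegree 2
  have homn2 : ∀ v, N.IsOmnian v → outdeg N.arc v = 2 := by
    intro v hv
    obtain ⟨hne, hall⟩ := hv
    have : (children v).Nonempty := by
      rw [← Finset.card_pos, hchcard]; omega
    obtain ⟨w, hw⟩ := this
    have hw' := (hmemch v w).mp hw
    exact (h w (hall w hw') v hw').2.2
  -- Hall's condition
  set ι := {v : V // N.IsOmnian v} with hι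
  set t : ι → Finset V := fun v => children v.1 with ht
  have hall : ∀ s : Finset ι, s.card ≤ (s.biUnion t).card := by
    intro s
    set E := s.biUnion t with hE
    have hEretic : ∀ r ∈ E, N.IsRetic r := by
      intro r hr
      obtain ⟨v, hv, hrv⟩ := Finset.mem_biUnion.mp hr
      exact v.2.2 r ((hmemch v.1 r).mp hrv)
    have key : ∑ v ∈ s, (t v).card = ∑ r ∈ E, (s.filter fun v => N.arc v.1 r = true).card := by
      have h1 : ∀ v ∈ s, (t v).card = ∑ r ∈ E, (if N.arc v.1 r = true then 1 else 0) := by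
        intro v hv
        have hsub : t v ⊆ E := Finset.subset_biUnion_of_mem t hv
        have : t v = E.filter fun r => N.arc v.1 r = true := by
          ext r
          simp only [Finset.mem_filter]
          constructor
          · intro hr; exact ⟨hsub hr, (hmemch v.1 r).mp hr⟩
          · intro hr; exact (hmemch v.1 r).mpr hr.2
        rw [this, Finset.card_filter]
      rw [Finset.sum_congr rfl h1, Finset.sum_comm]
      apply Finset.sum_congr rfl
      intro r _
      rw [Finset.card_filter]
    have hlhs : ∑ v ∈ s, (t v).card = 2 * s.card := by
      rw [Finset.sum_congr rfl (fun v hv => by rw [ht, hchcard, homn2 v.1 v.2])]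
      simp [mul_comm]
    have hrhs : ∑ r ∈ E, (s.filter fun v => N.arc v.1 r = true).card ≤ 2 * E.card := by
      calc ∑ r ∈ E, (s.filter fun v => N.arc v.1 r = true).card
          ≤ ∑ _r ∈ E, 2 := by
            apply Finset.sum_le_sum
            intro r hr
            have : (s.filter fun v => N.arc v.1 r = true).card ≤ (parents r).card := by
              apply Finset.card_le_card_of_injOn (fun v => v.1)
              · intro v hv
                rw [Finset.mem_coe, hmempa]
                exact (Finset.mem_filter.mp (Finset.mem_coe.mp hv)).2
              · intro a _ b _ hab
                exact Subtype.ext hab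
            rw [hpacard] at this
            have := hEretic r hr
            unfold BinNet.IsRetic at this
            omega
          _ = 2 * E.card := by simp [mul_comm]
    omega
  obtain ⟨f, hfinj, hft⟩ := (Finset.all_card_le_biUnion_card_iff_exists_injective t).mp hall
  -- choice of parent for each reticulation
  set p : V → V := fun r =>
    if hh : ∃ u : ι, f u = r then (Classical.choose hh).1
    else if hr : (Finset.univ.filter fun u => N.arc u r = true).Nonempty then hr.choose else r
    with hp
  have hp_arc : ∀ r, N.IsRetic r → N.arc (p r) r = true := by
    intro r hr
    rw [hp]
    dsimp only
    split
    · next hh =>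
      have := hft (Classical.choose hh)
      rw [Classical.choose_spec hh] at this
      exact (hmemch _ _).mp this
    · next =>
      have hne : (Finset.univ.filter fun u => N.arc u r = true).Nonempty := by
        rw [← Finset.card_pos]
        have : indeg N.arc r = 2 := hr
        unfold indeg at this
        omega
      rw [dif_pos hne]
      have := hne.choose_spec
      simp only [Finset.mem_filter] at this
      exact this.2
  -- the spanning tree
  set T : V → V → Bool := fun u v =>
    if N.arc u v = true ∧ (N.IsRetic v → p v = u) then true else false with hT
  have hTiff : ∀ u v, T u v = true ↔ (N.arc u v = true ∧ (N.IsRetic v → p v = u)) := by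
    intro u v
    rw [hT]
    simp only
    split <;> simp_all
  refine ⟨T, ⟨fun u v hT => ((hTiff u v).mp hT).1, ?_, ?_⟩, ?_⟩
  · -- no arcs into root
    intro u
    by_contra hc
    have hu : T u N.root = true := by
      cases hval : T u N.root
      · exact absurd hval hc
      · rfl
    have harc := ((hTiff u N.root).mp hu).1
    have : u ∈ Finset.univ.filter fun w => N.arc w N.root = true := by
      simp [harc]
    have h0 := N.root_indeg
    unfold indeg at h0
    rw [Finset.card_eq_zero] at h0
    rw [h0] at this
    exact absurd this (Finset.notMem_empty u)
  · -- indegree one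
    intro v hv
    by_cases hr : N.IsRetic v
    · have : (Finset.univ.filter fun u => T u v = true) = {p v} := by
        ext u
        simp only [Finset.mem_filter, Finset.mem_univ, true_and, Finset.mem_singleton, hTiff]
        constructor
        · intro ⟨_, h2⟩; exact (h2 hr).symm
        · rintro rfl; exact ⟨hp_arc v hr, fun _ => rfl⟩
      unfold indeg
      rw [this, Finset.card_singleton]
    · have : (Finset.univ.filter fun u => T u v = true)
          = (Finset.univ.filter fun u => N.arc u v = true) := by
        ext u
        simp only [Finset.mem_filter, Finset.mem_univ, true_and, hTiff]
        exact ⟨fun h => h.1, fun h => ⟨h, fun hc => absurd hc hr⟩⟩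
      unfold indeg
      rw [this]
      rcases N.vertex_types v hv with h1 | h1 | h1
      · exact h1.1
      · exact absurd h1.1 hr
      · exact h1.1
  · -- leaves of T are leaves of N
    intro v hvT
    by_contra hvN
    have hne : (Finset.univ.filter fun w => T v w = true) = ∅ := by
      unfold outdeg at hvT
      exact Finset.card_eq_zero.mp hvT
    have hnochild : ∀ w, T v w ≠ true := by
      intro w hw
      have : w ∈ Finset.univ.filter fun w => T v w = true := by simp [hw]
      rw [hne] at this
      exact absurd this (Finset.notMem_empty w)
    by_cases homn : N.IsOmnian v
    · set vι : ι := ⟨v, homn⟩ with hvι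
      set r := f vι with hrdef
      have hrch : r ∈ children v := hft vι
      have harcvr : N.arc v r = true := (hmemch v r).mp hrch
      have hrret : N.IsRetic r := homn.2 r harcvr
      have hpr : p r = v := by
        rw [hp]
        dsimp only
        have hh : ∃ u : ι, f u = r := ⟨vι, rfl⟩
        rw [dif_pos hh]
        have := Classical.choose_spec hh
        have heq : Classical.choose hh = vι := hfinj (by rw [this])
        rw [heq]
      exact hnochild r ((hTiff v r).mpr ⟨harcvr, fun _ => hpr⟩)
    · unfold BinNet.IsOmnian at homn
      push_neg at homn
      obtain ⟨w, hw1, hw2⟩ := homn hvN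
      exact hnochild w ((hTiff v w).mpr ⟨hw1, fun hc => absurd hc hw2⟩)
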